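/- For every real β > 0 and every integer m ≥ 1, the ratio (β^m/m!) / (∑_{n≥m} β^n/n!) is at least β/(e^β − 1). -/

import Mathlib

lemma fact_aux (m : ℕ) (hm : 1 ≤ m) :
    ∀ k, m.factorial * (k + 1).factorial ≤ (m + k).factorial := by
  intro k
  induction k with
  | zero => simp
  | succ k ih =>
    have h1 : k + 2 ≤ m + k + 1 := by omega
    calc m.factorial * (k + 1 + 1).factorial
        = m.factorial * (k + 1).factorial * (k + 2) := by
          rw [Nat.factorial_succ]; ring
      _ ≤ (m + k).factorial * (m + k + 1) := Nat.mul_le_mul ih h1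
      _ = (m + (k + 1)).factorial := by
          rw [show m + (k + 1) = (m + k) + 1 by ring, Nat.factorial_succ]; ring

/-- For every real `β > 0` and every integer `m ≥ 1`, the ratio
`(β^m/m!) / (∑_{n ≥ m} β^n/n!)` is at least `β/(e^β − 1)`. -/
theorem poisson_tail_ratio_bound (β : ℝ) (hβ : 0 < β) (m : ℕ) (hm : 1 ≤ m) :
    (β ^ m / m.factorial) / (∑' k : ℕ, β ^ (m + k) / (m + k).factorial) ≥
      β / (Real.exp β - 1) := by
  have hβ' : β ≠ 0 := ne_of_gt hβ
  have hsum : Summable (fun n : ℕ => β ^ n / n.factorial) :=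
    Real.summable_pow_div_factorial β
  have hexp : (∑' n : ℕ, β ^ n / n.factorial) = Real.exp β := by
    rw [Real.exp_eq_exp_ℝ, NormedSpace.exp_eq_tsum_div]
  -- shifted series summable
  have hshift : Summable (fun k : ℕ => β ^ (m + k) / (m + k).factorial) :=
    hsum.comp_injective (fun a b h => by omega)
  have hsucc : Summable (fun k : ℕ => β ^ (k + 1) / (k + 1).factorial) :=
    hsum.comp_injective (fun a b h => by omega)
  have hT : Summable (fun k : ℕ => β ^ k / (k + 1).factorial) := by
    have := hsucc.mul_left (1 / β)
    convert this using 2 with k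
    case e'_3 => rfl
    rw [pow_succ]
    field_simp
  set T : ℝ := ∑' k : ℕ, β ^ k / (k + 1).factorial with hTdef
  -- e^β - 1 = β * T
  have hbt : Real.exp β - 1 = β * T := by
    have h0 : (∑' n : ℕ, β ^ n / n.factorial)
        = β ^ 0 / (0 : ℕ).factorial + ∑' k : ℕ, β ^ (k + 1) / (k + 1).factorial :=
      Summable.tsum_eq_zero_add hsum
    have h1 : ∑' k : ℕ, β ^ (k + 1) / (k + 1).factorial = β * T := by
      rw [hTdef, ← tsum_mul_left]
      congr 1 with k
      rw [pow_succ]; ring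
    rw [← hexp, h0, h1]; simp
  have hTpos : 0 < T := by
    have hE : 0 < Real.exp β - 1 := by
      have := Real.add_one_lt_exp hβ'
      linarith
    rw [hbt] at hE
    nlinarith
  -- termwise bound: β^(m+k)/(m+k)! ≤ (β^m/m!) * (β^k/(k+1)!)
  have hterm : ∀ k : ℕ, β ^ (m + k) / (m + k).factorial
      ≤ (β ^ m / m.factorial) * (β ^ k / (k + 1).factorial) := by
    intro k
    have hf : (m.factorial * (k + 1).factorial : ℝ) ≤ ((m + k).factorial : ℝ) := by
      exact_mod_cast fact_aux m hm k
    have hfp : (0 : ℝ) < m.factorial * (k + 1).factorial := by positivity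
    have hfq : (0 : ℝ) < ((m + k).factorial : ℝ) := by positivity
    rw [pow_add, div_mul_div_comm]
    apply div_le_div_of_nonneg_left _ hfp hf
    positivity
  set S : ℝ := ∑' k : ℕ, β ^ (m + k) / (m + k).factorial with hSdef
  have hSle : S ≤ (β ^ m / m.factorial) * T := by
    rw [hSdef, hTdef, ← tsum_mul_left]
    exact Summable.tsum_le_tsum hterm hshift (hT.mul_left _)
  have hSpos : 0 < S := by
    rw [hSdef]
    apply Summable.tsum_pos hshift (fun k => by positivity) 0
    positivity
  have hnum : 0 < β ^ m / m.factorial := by positivity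
  have key : β / (Real.exp β - 1) = (β ^ m / m.factorial) / ((β ^ m / m.factorial) * T) := by
    rw [hbt]
    field_simp
  rw [ge_iff_le, key]
  exact div_le_div_of_nonneg_left (le_of_lt hnum) hSpos hSle
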